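/- arXiv:2502.09760 — 3 statements merged into one kernel-verified Lean document; each statement's English description precedes it below -/
import Mathlib

section
/- Let p ≥ 1, m ≥ 0, s > 0 with (s - m)p > d. Then the set W_P(C,s) = { x : |x_k| ≤ C/|k|^s for k ≠ 0, |x_0| ≤ C } is a compact subset of the weighted sequence space 𝒲^{m,p} with norm ‖x‖ = (∑_{i=0}^m ∑_{k∈ℤ^d} |k|^{ip} |x_k|^p)^{1/p}. -/
open scoped BigOperators ENNReal

noncomputable def znorm {d : ℕ} (k : Fin d → ℤ) : ℝ := ‖(fun i => (k i : ℝ) : Fin d → ℝ)‖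

/-- The modified norm on `ℤ^d`: the norm of `k` for `k ≠ 0`, and `|0| := 1`. -/
noncomputable def mnorm {d : ℕ} (k : Fin d → ℤ) : ℝ := if k = 0 then 1 else znorm k

lemma aux_summable_nat {q : ℝ} (hq : 1 < q) :
    Summable fun n : ℕ => (max (n : ℝ) 1) ^ (-q) := by
  have hsum : Summable fun n : ℕ => (n : ℝ) ^ (-q) + (if n = 0 then 1 else 0) :=
    (Real.summable_nat_rpow.mpr (by linarith)).add
      (summable_of_ne_finset_zero (s := {0}) (fun n hn => by
        simp only [Finset.mem_singleton] at hn; simp [hn]))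
  refine Summable.of_nonneg_of_le (fun n => ?_) (fun n => ?_) hsum
  · exact Real.rpow_nonneg (le_trans zero_le_one (le_max_right _ _)) _
  · rcases Nat.eq_zero_or_pos n with h | h
    · subst h
      simp [Real.zero_rpow (by linarith : -q ≠ 0)]
    · have h1 : (1 : ℝ) ≤ (n : ℝ) := by exact_mod_cast h
      rw [max_eq_left h1, if_neg (by omega)]
      simp

lemma aux_summable_int {q : ℝ} (hq : 1 < q) :
    Summable fun n : ℤ => (max |(n : ℝ)| 1) ^ (-q) := by
  apply Summable.of_nat_of_neg
  · exact (aux_summable_nat hq).congr (fun n => by simp [abs_of_nonneg, Nat.cast_nonneg])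
  · exact (aux_summable_nat hq).congr (fun n => by push_cast; simp)

lemma aux_summable_pi (d : ℕ) {q : ℝ} (hq : 1 < q) :
    Summable fun k : Fin d → ℤ => ∏ i, (max |(k i : ℝ)| 1) ^ (-q) := by
  induction d with
  | zero => simpa using summable_of_finite_support (Set.toFinite _)
  | succ n ih =>
    have h := (aux_summable_int hq).mul_of_nonneg ih
      (fun z => Real.rpow_nonneg (le_trans zero_le_one (le_max_right _ _)) _)
      (fun k => Finset.prod_nonneg fun i _ =>
        Real.rpow_nonneg (le_trans zero_le_one (le_max_right _ _)) _)
    rw [← (Fin.consEquiv (fun _ : Fin (n+1) => ℤ)).summable_iff]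
    refine h.congr fun x => ?_
    simp [Fin.consEquiv, Fin.prod_univ_succ]

lemma one_le_mnorm {d : ℕ} (k : Fin d → ℤ) : 1 ≤ mnorm k := by
  unfold mnorm znorm
  split_ifs with h
  · exact le_refl 1
  · obtain ⟨i, hi⟩ := Function.ne_iff.mp h
    have h1 : (1 : ℝ) ≤ |(k i : ℝ)| := by
      exact_mod_cast Int.one_le_abs (by simpa using hi)
    calc (1:ℝ) ≤ |(k i : ℝ)| := h1
    _ ≤ ‖(fun i => (k i : ℝ) : Fin d → ℝ)‖ := by
        simpa [Real.norm_eq_abs] using norm_le_pi_norm (fun i => (k i : ℝ)) i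

lemma mnorm_pos {d : ℕ} (k : Fin d → ℤ) : 0 < mnorm k :=
  lt_of_lt_of_le zero_lt_one (one_le_mnorm k)

lemma abs_coe_le_mnorm {d : ℕ} (k : Fin d → ℤ) (i : Fin d) : |(k i : ℝ)| ≤ mnorm k := by
  unfold mnorm znorm
  split_ifs with h
  · subst h; simp
  · simpa [Real.norm_eq_abs] using norm_le_pi_norm (fun i => (k i : ℝ)) i

lemma aux_summable_mnorm {d : ℕ} (hd : 1 ≤ d) {r : ℝ} (hr : (d : ℝ) < r) :
    Summable fun k : Fin d → ℤ => mnorm k ^ (-r) := by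
  have hd0 : (0 : ℝ) < d := by exact_mod_cast hd
  set q : ℝ := r / d with hqdef
  have hq : 1 < q := (one_lt_div hd0).mpr hr
  refine Summable.of_nonneg_of_le
    (fun k => Real.rpow_nonneg (mnorm_pos k).le _) (fun k => ?_) (aux_summable_pi d hq)
  have h1 : ∀ i, max |(k i : ℝ)| 1 ≤ mnorm k := fun i =>
    max_le (abs_coe_le_mnorm k i) (one_le_mnorm k)
  have hfac : ∀ i : Fin d, (0:ℝ) < max |(k i : ℝ)| 1 := fun i =>
    lt_of_lt_of_le zero_lt_one (le_max_right _ _)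
  have hP : (0:ℝ) < ∏ i, max |(k i : ℝ)| 1 :=
    Finset.prod_pos fun i _ => hfac i
  have hPle : (∏ i, max |(k i : ℝ)| 1) ≤ mnorm k ^ (d : ℕ) := by
    calc (∏ i, max |(k i : ℝ)| 1) ≤ ∏ _i : Fin d, mnorm k :=
          Finset.prod_le_prod (fun i _ => (hfac i).le) (fun i _ => h1 i)
    _ = mnorm k ^ (d : ℕ) := by
        rw [Finset.prod_const, Finset.card_univ, Fintype.card_fin]
  have key : mnorm k ^ (-r) = (mnorm k ^ (d : ℕ)) ^ (-q) := by
    rw [← Real.rpow_natCast (mnorm k) d, ← Real.rpow_mul (mnorm_pos k).le]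
    congr 1
    rw [hqdef]
    field_simp
  rw [key, Real.finset_prod_rpow _ _ (fun i _ => (hfac i).le)]
  exact Real.rpow_le_rpow_of_nonpos hP hPle (neg_nonpos.mpr (by linarith))

/-- `W_P(C,s)` is compact in the weighted sequence space `𝒲^{m,p}` with norm
`‖x‖ = (∑_{i=0}^m ∑_k |k|^{ip} |x_k|^p)^{1/p}`, provided `(s-m)p > d`.
We realize `𝒲^{m,p}` isometrically inside `ℓ^p(ℤ^d)` via the weighting
`x_k ↦ (∑_{i=0}^m |k|^{ip})^{1/p} x_k`, and state compactness of the image of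
`W_P(C,s)` under this isometry. -/
theorem stmt7 {d : ℕ} (hd : 1 ≤ d) (m : ℕ) (p : ℝ≥0∞) [hp : Fact (1 ≤ p)] (hp' : p ≠ ∞)
    (C s : ℝ) (hC : 0 < C) (hs : 0 < s) (hsp : (d : ℝ) < (s - m) * p.toReal) :
    IsCompact {y : lp (fun _ : Fin d → ℤ => ℝ) p | ∃ x : (Fin d → ℤ) → ℝ,
      (∀ k : Fin d → ℤ, k ≠ 0 → |x k| ≤ C / znorm k ^ s) ∧ |x 0| ≤ C ∧
      ∀ k : Fin d → ℤ,
        (y : (Fin d → ℤ) → ℝ) k =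
          (∑ i ∈ Finset.range (m + 1), mnorm k ^ ((i : ℝ) * p.toReal)) ^ (1 / p.toReal)
            * x k} := by
  classical
  have hp0 : (0 : ℝ≥0∞) < p := lt_of_lt_of_le zero_lt_one hp.out
  have hpr : 0 < p.toReal := ENNReal.toReal_pos hp0.ne' hp'
  set pr := p.toReal with hprdef
  set g : (Fin d → ℤ) → ℝ :=
    fun k => (∑ i ∈ Finset.range (m + 1), mnorm k ^ ((i : ℝ) * pr)) ^ (1 / pr) with hgdef
  set b : (Fin d → ℤ) → ℝ := fun k => C / mnorm k ^ s with hbdef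
  have hb_pos : ∀ k, 0 < b k := fun k => div_pos hC (Real.rpow_pos_of_pos (mnorm_pos k) s)
  have hS_pos : ∀ k : Fin d → ℤ, 0 < ∑ i ∈ Finset.range (m + 1), mnorm k ^ ((i : ℝ) * pr) :=
    fun k => Finset.sum_pos (fun i _ => Real.rpow_pos_of_pos (mnorm_pos k) _) ⟨0, by simp⟩
  have hg_pos : ∀ k, 0 < g k := fun k => Real.rpow_pos_of_pos (hS_pos k) _
  have hg_pow : ∀ k, g k ^ pr = ∑ i ∈ Finset.range (m + 1), mnorm k ^ ((i : ℝ) * pr) := by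
    intro k
    rw [hgdef]
    dsimp only
    rw [← Real.rpow_mul (hS_pos k).le, one_div, inv_mul_cancel₀ hpr.ne', Real.rpow_one]
  set w : (Fin d → ℤ) → ℝ := fun k => g k * b k with hwdef
  have hw_pos : ∀ k, 0 < w k := fun k => mul_pos (hg_pos k) (hb_pos k)
  -- summability of `w ^ pr`
  have hw : Summable (fun k : Fin d → ℤ => w k ^ pr) := by
    have hsum : Summable fun k : Fin d → ℤ =>
        (((m : ℝ) + 1) * C ^ pr) * mnorm k ^ (-((s - (m : ℝ)) * pr)) :=
      (aux_summable_mnorm hd hsp).mul_left _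
    refine Summable.of_nonneg_of_le
      (fun k => Real.rpow_nonneg (hw_pos k).le _) (fun k => ?_) hsum
    have hA := mnorm_pos k
    have hb_eq : b k ^ pr = C ^ pr * mnorm k ^ (-(s * pr)) := by
      rw [hbdef]
      dsimp only
      rw [div_eq_mul_inv, ← Real.rpow_neg hA.le,
        Real.mul_rpow hC.le (Real.rpow_nonneg hA.le _), ← Real.rpow_mul hA.le]
      ring_nf
    have hw_eq : w k ^ pr =
        (∑ i ∈ Finset.range (m + 1), mnorm k ^ ((i : ℝ) * pr)) *
          (C ^ pr * mnorm k ^ (-(s * pr))) := by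
      rw [hwdef, Real.mul_rpow (hg_pos k).le (hb_pos k).le, hg_pow, hb_eq]
    have hSle : (∑ i ∈ Finset.range (m + 1), mnorm k ^ ((i : ℝ) * pr)) ≤
        ((m : ℝ) + 1) * mnorm k ^ ((m : ℝ) * pr) := by
      have hbound : ∀ i ∈ Finset.range (m + 1),
          mnorm k ^ ((i : ℝ) * pr) ≤ mnorm k ^ ((m : ℝ) * pr) := by
        intro i hi
        refine Real.rpow_le_rpow_of_exponent_le (one_le_mnorm k)
          (mul_le_mul_of_nonneg_right ?_ hpr.le)
        exact_mod_cast Nat.lt_succ_iff.mp (Finset.mem_range.mp hi)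
      calc (∑ i ∈ Finset.range (m + 1), mnorm k ^ ((i : ℝ) * pr))
          ≤ (Finset.range (m + 1)).card • (mnorm k ^ ((m : ℝ) * pr)) :=
            Finset.sum_le_card_nsmul _ _ _ hbound
      _ = ((m : ℝ) + 1) * mnorm k ^ ((m : ℝ) * pr) := by
            rw [Finset.card_range, nsmul_eq_mul]; push_cast; ring
    have hcomb : mnorm k ^ ((m : ℝ) * pr) * mnorm k ^ (-(s * pr)) =
        mnorm k ^ (-((s - (m : ℝ)) * pr)) := by
      rw [← Real.rpow_add hA]; ring_nf
    calc w k ^ pr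
        = (∑ i ∈ Finset.range (m + 1), mnorm k ^ ((i : ℝ) * pr)) *
            (C ^ pr * mnorm k ^ (-(s * pr))) := hw_eq
      _ ≤ (((m : ℝ) + 1) * mnorm k ^ ((m : ℝ) * pr)) * (C ^ pr * mnorm k ^ (-(s * pr))) := by
          refine mul_le_mul_of_nonneg_right hSle ?_
          positivity
      _ = (((m : ℝ) + 1) * C ^ pr) * (mnorm k ^ ((m : ℝ) * pr) * mnorm k ^ (-(s * pr))) := by
          ring
      _ = (((m : ℝ) + 1) * C ^ pr) * mnorm k ^ (-((s - (m : ℝ)) * pr)) := by rw [hcomb]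
  -- the compact cube
  set X : Set ((Fin d → ℤ) → ℝ) :=
    Set.univ.pi fun k => Set.Icc (-(b k)) (b k) with hXdef
  have hXc : IsCompact X := isCompact_univ_pi fun k => isCompact_Icc
  haveI : CompactSpace X := isCompact_iff_compactSpace.mp hXc
  have hXabs : ∀ x : X, ∀ k, |(x : (Fin d → ℤ) → ℝ) k| ≤ b k := by
    rintro ⟨x, hx⟩ k
    exact abs_le.mpr ⟨(hx k trivial).1, (hx k trivial).2⟩
  -- pointwise bound
  have hptw : ∀ (x : X) (k : Fin d → ℤ), ‖g k * (x : (Fin d → ℤ) → ℝ) k‖ ^ pr ≤ w k ^ pr := by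
    intro x k
    refine Real.rpow_le_rpow (norm_nonneg _) ?_ hpr.le
    rw [Real.norm_eq_abs, abs_mul, abs_of_nonneg (hg_pos k).le]
    exact mul_le_mul_of_nonneg_left (hXabs x k) (hg_pos k).le
  have hFmem : ∀ x : X, Memℓp (fun k => g k * (x : (Fin d → ℤ) → ℝ) k) p := by
    intro x
    apply memℓp_gen
    exact Summable.of_nonneg_of_le
      (fun k => Real.rpow_nonneg (norm_nonneg _) _) (fun k => hptw x k) hw
  let Φ : X → lp (fun _ : Fin d → ℤ => ℝ) p :=
    fun x => ⟨fun k => g k * (x : (Fin d → ℤ) → ℝ) k, hFmem x⟩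
  have hΦapp : ∀ (x : X) (k : Fin d → ℤ),
      (Φ x : (Fin d → ℤ) → ℝ) k = g k * (x : (Fin d → ℤ) → ℝ) k := fun x k => rfl
  -- finite approximations
  let ΦT : Finset (Fin d → ℤ) → X → lp (fun _ : Fin d → ℤ => ℝ) p :=
    fun T x => ∑ k ∈ T, lp.single p k ((Φ x : (Fin d → ℤ) → ℝ) k)
  have hcontT : ∀ T, Continuous (ΦT T) := by
    intro T
    refine continuous_finset_sum _ fun k _ => ?_
    have hrw : ∀ x : X, lp.single p k ((Φ x : (Fin d → ℤ) → ℝ) k) =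
        ((x : (Fin d → ℤ) → ℝ) k) • (lp.single p k (g k) : lp (fun _ : Fin d → ℤ => ℝ) p) := by
      intro x
      rw [← lp.single_smul]
      congr 1
      simp [hΦapp, smul_eq_mul, mul_comm]
    refine Continuous.congr ?_ fun x => (hrw x).symm
    exact (Continuous.smul ((continuous_apply k).comp continuous_subtype_val)
      continuous_const)
  -- uniform convergence
  have hTU : TendstoUniformly (fun T x => ΦT T x) Φ Filter.atTop := by
    rw [Metric.tendstoUniformly_iff]
    intro ε hε
    have htail := tendsto_tsum_compl_atTop_zero (fun k : Fin d → ℤ => w k ^ pr)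
    have hev : ∀ᶠ T : Finset (Fin d → ℤ) in Filter.atTop,
        (∑' k : {k : Fin d → ℤ // k ∉ T}, w (k : Fin d → ℤ) ^ pr) < ε ^ pr :=
      (tendsto_order.1 htail).2 _ (Real.rpow_pos_of_pos hε pr)
    filter_upwards [hev] with T hT x
    rw [dist_eq_norm]
    have hnorm := lp.norm_compl_sum_single hpr (Φ x) T
    have hsummable : Summable fun k => ‖(Φ x : (Fin d → ℤ) → ℝ) k‖ ^ pr :=
      (lp.hasSum_norm hpr (Φ x)).summable
    have hcompl := Summable.sum_add_tsum_compl (s := T) hsummable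
    have hnorm_tsum := lp.norm_rpow_eq_tsum hpr (Φ x)
    have hdiff : ‖Φ x - ΦT T x‖ ^ pr =
        ∑' k : ↥((T : Set (Fin d → ℤ))ᶜ),
          ‖(Φ x : (Fin d → ℤ) → ℝ) (k : Fin d → ℤ)‖ ^ pr := by
      have : ΦT T x = ∑ k ∈ T, lp.single p k ((Φ x : (Fin d → ℤ) → ℝ) k) := rfl
      rw [this, hnorm, hnorm_tsum]
      linarith [hcompl]
    have hle : (∑' k : ↥((T : Set (Fin d → ℤ))ᶜ),
          ‖(Φ x : (Fin d → ℤ) → ℝ) (k : Fin d → ℤ)‖ ^ pr) ≤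
        ∑' k : ↥((T : Set (Fin d → ℤ))ᶜ), w (k : Fin d → ℤ) ^ pr :=
      Summable.tsum_le_tsum (fun k => hptw x k) (hsummable.subtype _) (hw.subtype _)
    have htail_eq : (∑' k : ↥((T : Set (Fin d → ℤ))ᶜ),
        w (k : Fin d → ℤ) ^ pr) = ∑' k : {k : Fin d → ℤ // k ∉ T}, w (k : Fin d → ℤ) ^ pr := by
      rfl
    have hlt : ‖Φ x - ΦT T x‖ ^ pr < ε ^ pr := by
      rw [hdiff]
      calc (∑' k : ↥((T : Set (Fin d → ℤ))ᶜ),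
            ‖(Φ x : (Fin d → ℤ) → ℝ) (k : Fin d → ℤ)‖ ^ pr)
          ≤ _ := hle
        _ = _ := htail_eq
        _ < ε ^ pr := hT
    by_contra hcon
    push_neg at hcon
    exact absurd hlt (not_lt.mpr (Real.rpow_le_rpow hε.le hcon hpr.le))
  have hΦcont : Continuous Φ := hTU.continuous (Filter.Eventually.of_forall hcontT).frequently
  -- identify the set with the range of Φ
  have hset : {y : lp (fun _ : Fin d → ℤ => ℝ) p | ∃ x : (Fin d → ℤ) → ℝ,
      (∀ k : Fin d → ℤ, k ≠ 0 → |x k| ≤ C / znorm k ^ s) ∧ |x 0| ≤ C ∧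
      ∀ k : Fin d → ℤ,
        (y : (Fin d → ℤ) → ℝ) k =
          (∑ i ∈ Finset.range (m + 1), mnorm k ^ ((i : ℝ) * p.toReal)) ^ (1 / p.toReal)
            * x k} = Set.range Φ := by
    have hbk : ∀ k : Fin d → ℤ, k ≠ 0 → b k = C / znorm k ^ s := by
      intro k hk
      rw [hbdef]
      simp only [mnorm, if_neg hk]
    have hb0 : b 0 = C := by
      rw [hbdef]
      simp [mnorm]
    ext y
    simp only [Set.mem_setOf_eq, Set.mem_range]
    constructor
    · rintro ⟨x, hx1, hx0, hxy⟩
      have hxX : x ∈ X := by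
        intro k _
        have habs : |x k| ≤ b k := by
          by_cases hk : k = 0
          · subst hk; rw [hb0]; exact hx0
          · rw [hbk k hk]; exact hx1 k hk
        exact abs_le.mp habs
      refine ⟨⟨x, hxX⟩, ?_⟩
      apply lp.ext
      funext k
      exact (hxy k).symm
    · rintro ⟨x, rfl⟩
      refine ⟨(x : (Fin d → ℤ) → ℝ), fun k hk => ?_, ?_, fun k => rfl⟩
      · rw [← hbk k hk]; exact hXabs x k
      · rw [← hb0]; exact hXabs x 0
  rw [hset]
  exact isCompact_range hΦcont
end

section
/- With the assumptions above and s > p + d, the map F : W_P(C,s) → c₀(ℤ^d), F(u)_k = -λ_k u_k + N_k(u), is continuous, where W_P(C,s) carries the topology of c₀(ℤ^d). -/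
open scoped BigOperators ZeroAtInfty

/-- The `v`-th Fourier coefficient `i^{|b|} v^b u_v` of the derivative `D^b u`. -/
noncomputable def fac {d : ℕ} (u : (Fin d → ℤ) → ℂ) (b : Fin d → ℕ) (v : Fin d → ℤ) : ℂ :=
  Complex.I ^ (∑ i, b i) * (∏ i, ((v i : ℂ)) ^ b i) * u v

lemma aux14_abs_coord_le_znorm {d : ℕ} (v : Fin d → ℤ) (i : Fin d) :
    |(v i : ℝ)| ≤ znorm v := by
  exact (Real.norm_eq_abs _).symm.le.trans (norm_le_pi_norm (fun j => (v j : ℝ)) i)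

lemma aux14_one_le_znorm {d : ℕ} {v : Fin d → ℤ} (hv : v ≠ 0) : 1 ≤ znorm v := by
  obtain ⟨i, hi⟩ := Function.ne_iff.1 hv
  have h1 : (1 : ℝ) ≤ |(v i : ℝ)| := by
    have := Int.one_le_abs (by simpa using hi)
    calc (1:ℝ) ≤ (|v i| : ℤ) := by exact_mod_cast this
    _ = |(v i : ℝ)| := by push_cast; ring
  exact h1.trans (aux14_abs_coord_le_znorm v i)

lemma aux14_one_le_mnorm {d : ℕ} (v : Fin d → ℤ) : 1 ≤ mnorm v := by
  unfold mnorm; split_ifs with h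
  · exact le_refl 1
  · exact aux14_one_le_znorm h

lemma aux14_mnorm_pos {d : ℕ} (v : Fin d → ℤ) : 0 < mnorm v :=
  lt_of_lt_of_le one_pos (aux14_one_le_mnorm v)

lemma aux14_abs_coord_le_mnorm {d : ℕ} (v : Fin d → ℤ) (i : Fin d) :
    |(v i : ℝ)| ≤ mnorm v := by
  unfold mnorm; split_ifs with h
  · subst h; simp
  · exact aux14_abs_coord_le_znorm v i

lemma aux14_summable_int {t : ℝ} (ht : 1 < t) :
    Summable fun n : ℤ => (max 1 |(n : ℝ)|) ^ (-t) := by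
  have hnat : Summable fun n : ℕ => (max 1 (n : ℝ)) ^ (-t) := by
    rw [← summable_nat_add_iff 1]
    have h0 : Summable fun n : ℕ => ((n : ℝ)) ^ (-t) :=
      Real.summable_nat_rpow.2 (by linarith)
    have h1 : Summable fun n : ℕ => (((n + 1 : ℕ) : ℝ)) ^ (-t) :=
      (summable_nat_add_iff 1).2 h0
    refine h1.congr fun n => ?_
    have : (max 1 ((n + 1 : ℕ) : ℝ)) = ((n + 1 : ℕ) : ℝ) := by
      apply max_eq_right; push_cast; linarith [Nat.cast_nonneg (α := ℝ) n]
    rw [this]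
  have hpos : Summable fun n : ℕ => (max 1 |((n : ℤ) : ℝ)|) ^ (-t) := by
    refine hnat.congr fun n => ?_
    simp [abs_of_nonneg (by positivity : (0:ℝ) ≤ (n:ℝ))]
  have hneg : Summable fun n : ℕ => (max 1 |(Int.cast (-(n : ℤ)) : ℝ)|) ^ (-t) := by
    refine hnat.congr fun n => ?_
    push_cast
    rw [abs_neg, abs_of_nonneg (by positivity : (0:ℝ) ≤ (n:ℝ))]
  exact Summable.of_nat_of_neg hpos hneg

lemma aux14_summable_pi_prod {ι : Type*} {f : ι → ℝ} (hf0 : ∀ i, 0 ≤ f i)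
    (hf : Summable f) : ∀ l : ℕ, Summable fun v : Fin l → ι => ∏ m, f (v m) := by
  intro l
  induction l with
  | zero =>
      have : (fun v : Fin 0 → ι => ∏ m, f (v m)) = fun _ => 1 := by
        funext v; simp
      rw [this]
      haveI : Finite (Fin 0 → ι) := Finite.of_subsingleton
      exact .of_finite
  | succ n ih =>
      have hfle : 0 ≤ f := fun i => hf0 i
      have hgle : (0 : (Fin n → ι) → ℝ) ≤ fun w => ∏ m, f (w m) :=
        fun w => Finset.prod_nonneg fun m _ => hf0 _
      have hprod : Summable fun p : ι × (Fin n → ι) => f p.1 * ∏ m, f (p.2 m) :=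
        Summable.mul_of_nonneg (g := fun w : Fin n → ι => ∏ m, f (w m)) hf ih hfle hgle
      have hcomp : Summable
          ((fun v : Fin (n+1) → ι => ∏ m, f (v m)) ∘ (Fin.consEquiv fun _ => ι)) := by
        refine hprod.congr fun p => ?_
        simp only [Function.comp_apply, Fin.consEquiv, Equiv.coe_fn_mk]
        rw [Fin.prod_univ_succ]
        simp
      exact ((Fin.consEquiv fun _ => ι).summable_iff).1 hcomp

lemma aux14_summable_mnorm {d : ℕ} (hd : 1 ≤ d) {q : ℝ} (hq : (d : ℝ) < q) :
    Summable fun v : Fin d → ℤ => mnorm v ^ (-q) := by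
  have hd0 : (0 : ℝ) < d := by exact_mod_cast hd
  set t : ℝ := q / d with ht_def
  have ht : 1 < t := (one_lt_div hd0).2 hq
  have hsum : Summable fun v : Fin d → ℤ => ∏ i, (max 1 |(v i : ℝ)|) ^ (-t) :=
    aux14_summable_pi_prod (fun n => Real.rpow_nonneg (le_trans zero_le_one (le_max_left _ _)) _)
      (aux14_summable_int ht) d
  refine Summable.of_nonneg_of_le
    (fun v => Real.rpow_nonneg (aux14_mnorm_pos v).le _) (fun v => ?_) hsum
  have hP1 : ∀ i : Fin d, (0:ℝ) ≤ max 1 |(v i : ℝ)| := fun i => by positivity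
  have hPle : (∏ i, max 1 |(v i : ℝ)|) ≤ mnorm v ^ d := by
    calc (∏ i, max 1 |(v i : ℝ)|) ≤ ∏ _i : Fin d, mnorm v := by
          refine Finset.prod_le_prod (fun i _ => hP1 i) fun i _ => ?_
          exact max_le (aux14_one_le_mnorm v) (aux14_abs_coord_le_mnorm v i)
      _ = mnorm v ^ d := by simp [Finset.prod_const]
  have hPpos : (0:ℝ) < ∏ i, max 1 |(v i : ℝ)| :=
    Finset.prod_pos fun i _ => lt_of_lt_of_le one_pos (le_max_left _ _)
  have key : mnorm v ^ (-q) = (mnorm v ^ (d : ℝ)) ^ (-t) := by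
    rw [← Real.rpow_mul (aux14_mnorm_pos v).le]
    congr 1
    field_simp [ht_def]
    simp only [ht_def]
    field_simp [hd0.ne']
  rw [key]
  calc (mnorm v ^ (d:ℝ)) ^ (-t) ≤ (∏ i, max 1 |(v i : ℝ)|) ^ (-t) := by
        refine Real.rpow_le_rpow_of_nonpos hPpos ?_ (by linarith)
        rw [Real.rpow_natCast]
        exact hPle
    _ = ∏ i, (max 1 |(v i : ℝ)|) ^ (-t) :=
        (Real.finset_prod_rpow _ _ (fun i _ => hP1 i) _).symm

/-- Continuity of the vector field `F(u)_k = -λ_k u_k + N_k(u)` of a dissipative PDE,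
where `N` is a polynomial (a finite sum of `M` monomials, the `t`-th of degree `l t`
with derivative multi-indices `β t m` of order `≤ r`), on `W = W_P(C,s)` with
`s > p + d`, as a map `W → c₀(ℤ^d)` where `W` carries the `c₀` (sup-norm) topology. -/
theorem stmt14 {d r M : ℕ} (hd : 1 ≤ d) (p s C K Ls Lu : ℝ)
    (hp : (r : ℝ) < p) (hLs : 0 < Ls) (hLu : 0 < Lu) (hC : 0 < C) (hs : p + d < s)
    (lam : (Fin d → ℤ) → ℝ)
    (hlam : ∀ k : Fin d → ℤ, K < znorm k → Ls * znorm k ^ p ≤ lam k ∧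
      lam k ≤ Lu * znorm k ^ p)
    (l : Fin M → ℕ) (hl : ∀ t, 1 ≤ l t) (a : Fin M → ℂ)
    (β : (t : Fin M) → Fin (l t) → Fin d → ℕ) (hβ : ∀ t m, (∑ i, β t m i) ≤ r)
    (G : {u : C₀((Fin d → ℤ), ℂ) //
        (∀ k : Fin d → ℤ, k ≠ 0 → ‖u k‖ ≤ C / znorm k ^ s) ∧
        ‖u 0‖ ≤ C} → C₀((Fin d → ℤ), ℂ))
    (hG : ∀ u (k : Fin d → ℤ), G u k = -(lam k : ℂ) * u.1 k +
      ∑ t : Fin M, a t * ∑' v : {v : Fin (l t) → (Fin d → ℤ) // ∑ m, v m = k},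
        ∏ m, fac (u.1 : (Fin d → ℤ) → ℂ) (β t m) (v.1 m)) :
    Continuous G := by
  classical
  have hr0 : (0:ℝ) ≤ r := Nat.cast_nonneg r
  have hd1 : (1:ℝ) ≤ d := by exact_mod_cast hd
  have hdq : (d : ℝ) < s - r := by linarith
  have hdp : (d : ℝ) < s - p := by linarith
  have hs0 : (0:ℝ) < s := by linarith
  -- the dominating single-site function
  set g : (Fin d → ℤ) → ℝ := fun w => C * mnorm w ^ ((r:ℝ) - s) with hg_def
  have hg0 : ∀ w, 0 ≤ g w := fun w =>
    mul_nonneg hC.le (Real.rpow_nonneg (aux14_mnorm_pos w).le _)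
  have hgsum : Summable g := by
    refine ((aux14_summable_mnorm hd hdq).mul_left C).congr fun w => ?_
    rw [neg_sub]
  -- uniform coefficient bound
  have huv : ∀ (u : C₀((Fin d → ℤ), ℂ)),
      (∀ k : Fin d → ℤ, k ≠ 0 → ‖u k‖ ≤ C / znorm k ^ s) →
      ‖u 0‖ ≤ C → ∀ v, ‖u v‖ ≤ C * mnorm v ^ (-s) := by
    intro u h1 h2 v
    by_cases hv : v = 0
    · subst hv
      simpa [mnorm, Real.one_rpow] using h2
    · have hz : (0:ℝ) ≤ znorm v := norm_nonneg _
      have : mnorm v = znorm v := if_neg hv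
      rw [this, Real.rpow_neg hz, ← div_eq_mul_inv]
      exact h1 v hv
  -- bound for a single factor
  have hfac : ∀ (u : (Fin d → ℤ) → ℂ), (∀ v, ‖u v‖ ≤ C * mnorm v ^ (-s)) →
      ∀ (b : Fin d → ℕ), (∑ i, b i) ≤ r → ∀ v, ‖fac u b v‖ ≤ g v := by
    intro u hu b hb v
    have h1 : ‖fac u b v‖
        = (∏ i, |(v i : ℝ)| ^ b i) * ‖u v‖ := by
      unfold fac
      rw [norm_mul, norm_mul, norm_pow, Complex.norm_I, one_pow, one_mul, norm_prod]
      congr 1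
      refine Finset.prod_congr rfl fun i _ => ?_
      rw [norm_pow, Complex.norm_intCast]
    have h2 : (∏ i, |(v i : ℝ)| ^ b i) ≤ mnorm v ^ (∑ i, b i) := by
      rw [← Finset.prod_pow_eq_pow_sum]
      exact Finset.prod_le_prod (fun i _ => pow_nonneg (abs_nonneg _) _)
        (fun i _ => pow_le_pow_left₀ (abs_nonneg _) (aux14_abs_coord_le_mnorm v i) _)
    have h3 : mnorm v ^ (∑ i, b i) ≤ mnorm v ^ r :=
      pow_le_pow_right₀ (aux14_one_le_mnorm v) hb
    calc ‖fac u b v‖ = _ := h1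
      _ ≤ (mnorm v ^ r) * (C * mnorm v ^ (-s)) :=
          mul_le_mul (h2.trans h3) (hu v) (norm_nonneg _)
            (pow_nonneg (aux14_mnorm_pos v).le _)
      _ = g v := by
          show mnorm v ^ r * (C * mnorm v ^ (-s)) = C * mnorm v ^ ((r:ℝ) - s)
          rw [show (r:ℝ) - s = (r:ℝ) + (-s) by ring,
            Real.rpow_add (aux14_mnorm_pos v), ← Real.rpow_natCast (mnorm v) r]
          ring
  -- summability of products of the dominating function
  have hgP : ∀ t : Fin M, Summable fun v : Fin (l t) → (Fin d → ℤ) => ∏ m, g (v m) :=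
    fun t => aux14_summable_pi_prod hg0 hgsum (l t)
  have hgPk : ∀ (t : Fin M) (k : Fin d → ℤ),
      Summable fun v : {v : Fin (l t) → (Fin d → ℤ) // ∑ m, v m = k} =>
        ∏ m, g (v.1 m) :=
    fun t k => (hgP t).comp_injective Subtype.val_injective
  have hTsum : ∀ t : Fin M, Summable fun k : Fin d → ℤ =>
      ∑' v : {v : Fin (l t) → (Fin d → ℤ) // ∑ m, v m = k}, ∏ m, g (v.1 m) := by
    intro t
    have h1 : Summable fun pp : Σ k : Fin d → ℤ,
        {v : Fin (l t) → (Fin d → ℤ) // ∑ m, v m = k} => ∏ m, g (pp.2.1 m) := by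
      have := ((Equiv.sigmaFiberEquiv
        (fun v : Fin (l t) → (Fin d → ℤ) => ∑ m, v m)).summable_iff).2 (hgP t)
      exact this.congr fun pp => rfl
    exact h1.sigma
  -- norm bound for the monomials
  have hfacnorm : ∀ (u : (Fin d → ℤ) → ℂ), (∀ v, ‖u v‖ ≤ C * mnorm v ^ (-s)) →
      ∀ (t : Fin M) (v : Fin (l t) → (Fin d → ℤ)),
      ‖∏ m, fac u (β t m) (v m)‖ ≤ ∏ m, g (v m) := by
    intro u hu t v
    rw [norm_prod]
    refine Finset.prod_le_prod (fun m _ => norm_nonneg _) fun m _ => ?_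
    exact hfac u hu (β t m) (hβ t m) (v m)
  have hfacnormSummable : ∀ (u : (Fin d → ℤ) → ℂ),
      (∀ v, ‖u v‖ ≤ C * mnorm v ^ (-s)) →
      ∀ (t : Fin M) (k : Fin d → ℤ),
      Summable fun v : {v : Fin (l t) → (Fin d → ℤ) // ∑ m, v m = k} =>
        ‖∏ m, fac u (β t m) (v.1 m)‖ :=
    fun u hu t k => Summable.of_nonneg_of_le (fun _ => norm_nonneg _)
      (fun v => hfacnorm u hu t v.1) (hgPk t k)
  -- bound for each monomial sum
  have hNb : ∀ (u : (Fin d → ℤ) → ℂ), (∀ v, ‖u v‖ ≤ C * mnorm v ^ (-s)) →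
      ∀ (t : Fin M) (k : Fin d → ℤ),
      ‖(∑' v : {v : Fin (l t) → (Fin d → ℤ) // ∑ m, v m = k},
          ∏ m, fac u (β t m) (v.1 m))‖ ≤
        ∑' v : {v : Fin (l t) → (Fin d → ℤ) // ∑ m, v m = k}, ∏ m, g (v.1 m) := by
    intro u hu t k
    refine le_trans (norm_tsum_le_tsum_norm (hfacnormSummable u hu t k)) ?_
    exact Summable.tsum_le_tsum (fun v => hfacnorm u hu t v.1) (hfacnormSummable u hu t k) (hgPk t k)
  -- evaluation is continuous
  have heval : ∀ w : Fin d → ℤ, Continuous fun u : {u : C₀((Fin d → ℤ), ℂ) //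
      (∀ k : Fin d → ℤ, k ≠ 0 → ‖u k‖ ≤ C / znorm k ^ s) ∧
      ‖u 0‖ ≤ C} => u.1 w := by
    intro w
    rw [Metric.continuous_iff]
    intro u ε hε
    refine ⟨ε, hε, fun u' hu' => lt_of_le_of_lt ?_ hu'⟩
    calc dist (u'.1 w) (u.1 w)
        = dist (u'.1.toBCF w) (u.1.toBCF w) := rfl
      _ ≤ dist u'.1.toBCF u.1.toBCF := BoundedContinuousFunction.dist_coe_le_dist w
      _ = dist u'.1 u.1 := ZeroAtInftyContinuousMap.dist_toBCF_eq_dist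
      _ = dist u' u := rfl
  -- coordinatewise continuity
  have hcont : ∀ k : Fin d → ℤ, Continuous fun u : {u : C₀((Fin d → ℤ), ℂ) //
      (∀ k : Fin d → ℤ, k ≠ 0 → ‖u k‖ ≤ C / znorm k ^ s) ∧
      ‖u 0‖ ≤ C} => (G u) k := by
    intro k
    have hfun : (fun u : {u : C₀((Fin d → ℤ), ℂ) //
        (∀ k : Fin d → ℤ, k ≠ 0 → ‖u k‖ ≤ C / znorm k ^ s) ∧
        ‖u 0‖ ≤ C} => (G u) k) = fun u => -(lam k : ℂ) * u.1 k +
        ∑ t : Fin M, a t * ∑' v : {v : Fin (l t) → (Fin d → ℤ) // ∑ m, v m = k},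
          ∏ m, fac (u.1 : (Fin d → ℤ) → ℂ) (β t m) (v.1 m) := by
      funext u; exact hG u k
    rw [hfun]
    refine (continuous_const.mul (heval k)).add
      (continuous_finset_sum _ fun t _ => continuous_const.mul ?_)
    refine continuous_tsum (fun v => ?_) (hgPk t k) (fun v u => ?_)
    · refine continuous_finset_prod _ fun m _ => ?_
      simp only [fac]
      exact continuous_const.mul (heval (v.1 m))
    · exact hfacnorm u.1 (huv u.1 u.2.1 u.2.2) t v.1
  -- finiteness of balls
  have hfin_le : ∀ R : ℝ, {k : Fin d → ℤ | znorm k ≤ R}.Finite := by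
    intro R
    have hIcc : ∀ _i : Fin d, ({n : ℤ | |(n:ℝ)| ≤ R} : Set ℤ).Finite := by
      intro i
      refine (Finset.finite_toSet (Finset.Icc (-⌈R⌉) ⌈R⌉)).subset ?_
      intro n hn
      simp only [Set.mem_setOf_eq] at hn
      rw [abs_le] at hn
      simp only [Finset.coe_Icc, Set.mem_Icc]
      constructor
      · have h3 : (-(⌈R⌉:ℝ)) ≤ (n:ℝ) := le_trans (neg_le_neg (Int.le_ceil R)) hn.1
        exact_mod_cast h3
      · exact_mod_cast le_trans hn.2 (Int.le_ceil R)
    refine (Set.Finite.pi' hIcc).subset ?_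
    intro k hk i
    exact le_trans (aux14_abs_coord_le_znorm k i) hk
  -- the tail majorant
  set hh : (Fin d → ℤ) → ℝ := fun k => C * Lu * mnorm k ^ (p - s) +
      ∑ t : Fin M, ‖a t‖ *
        (∑' v : {v : Fin (l t) → (Fin d → ℤ) // ∑ m, v m = k}, ∏ m, g (v.1 m)) with hh_def
  have hhsum : Summable hh := by
    refine Summable.add ?_ ?_
    · refine ((aux14_summable_mnorm hd hdp).mul_left (C * Lu)).congr fun k => ?_
      rw [neg_sub]
    · exact summable_sum fun t _ => (hTsum t).mul_left _
  have hGb : ∀ k : Fin d → ℤ, k ≠ 0 → K < znorm k →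
      ∀ u, ‖(G u) k‖ ≤ hh k := by
    intro k hk0 hkK u
    rw [hG]
    refine le_trans (norm_add_le _ _) (add_le_add ?_ ?_)
    · have hzpos : (0:ℝ) < znorm k := lt_of_lt_of_le one_pos (aux14_one_le_znorm hk0)
      have hlam_pos : 0 ≤ lam k :=
        le_trans (mul_nonneg hLs.le (Real.rpow_nonneg (norm_nonneg _) _)) (hlam k hkK).1
      have h1 : ‖-(lam k : ℂ) * u.1 k‖ = lam k * ‖u.1 k‖ := by
        rw [norm_mul, norm_neg, Complex.norm_real, Real.norm_eq_abs, abs_of_nonneg hlam_pos]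
      rw [h1]
      have hm : mnorm k = znorm k := if_neg hk0
      calc lam k * ‖u.1 k‖
          ≤ (Lu * znorm k ^ p) * (C * mnorm k ^ (-s)) :=
            mul_le_mul (hlam k hkK).2 (huv u.1 u.2.1 u.2.2 k) (norm_nonneg _)
              (mul_nonneg hLu.le (Real.rpow_nonneg (norm_nonneg _) _))
        _ = C * Lu * mnorm k ^ (p - s) := by
            rw [hm, show p - s = p + (-s) by ring, Real.rpow_add hzpos]
            ring
    · refine le_trans (norm_sum_le _ _) (Finset.sum_le_sum fun t _ => ?_)
      rw [norm_mul]
      exact mul_le_mul_of_nonneg_left (hNb u.1 (huv u.1 u.2.1 u.2.2) t k)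
        (norm_nonneg _)
  -- conclusion
  rw [continuous_iff_continuousAt]
  intro u₀
  rw [ContinuousAt, Metric.tendsto_nhds]
  intro ε hε
  have hε4 : (0:ℝ) < ε/4 := by linarith
  have hfe : {k : Fin d → ℤ | ¬ hh k < ε/4}.Finite := by
    have := (hhsum.tendsto_cofinite_zero).eventually (gt_mem_nhds hε4)
    exact Filter.eventually_cofinite.1 this
  set Bad : Set (Fin d → ℤ) :=
    ({0} ∪ {k | znorm k ≤ K}) ∪ {k | ¬ hh k < ε/4} with hBad_def
  have hBadFin : Bad.Finite :=
    ((Set.finite_singleton _).union (hfin_le K)).union hfe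
  have hsmall : ∀ k ∉ Bad, ∀ u, ‖(G u) k‖ ≤ ε/4 := by
    intro k hk u
    simp only [hBad_def, Set.mem_union, Set.mem_singleton_iff, Set.mem_setOf_eq] at hk
    push_neg at hk
    obtain ⟨⟨hk0, hkK⟩, hkh⟩ := hk
    exact (hGb k hk0 hkK u).trans hkh.le
  have hEv : ∀ᶠ u in nhds u₀, ∀ k ∈ Bad, dist ((G u) k) ((G u₀) k) < ε/4 := by
    rw [Set.Finite.eventually_all hBadFin]
    intro k _
    exact (Metric.tendsto_nhds.1 ((hcont k).continuousAt)) (ε/4) hε4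
  filter_upwards [hEv] with u hu
  have hnorm : dist (G u) (G u₀) ≤ ε/2 := by
    rw [dist_eq_norm, ← ZeroAtInftyContinuousMap.norm_toBCF_eq_norm]
    refine (BoundedContinuousFunction.norm_le (by linarith)).2 fun k => ?_
    have hco : (G u - G u₀).toBCF k = (G u) k - (G u₀) k := rfl
    rw [hco]
    by_cases hk : k ∈ Bad
    · have h1 := hu k hk
      rw [dist_eq_norm] at h1
      linarith
    · have h1 := hsmall k hk u
      have h2 := hsmall k hk u₀
      calc ‖(G u) k - (G u₀) k‖ ≤ ‖(G u) k‖ + ‖(G u₀) k‖ := norm_sub_le _ _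
        _ ≤ ε/4 + ε/4 := add_le_add h1 h2
        _ = ε/2 := by ring
  calc dist (G u) (G u₀) ≤ ε/2 := hnorm
    _ < ε := by linarith
end

section
/- Each coordinate function N_k : W_P(C,s) → ℂ of the polynomial nonlinearity is continuous with respect to the product (pointwise-convergence) topology on W_P(C,s), provided s > d + r. -/
open scoped BigOperators

namespace Stmt15Aux

noncomputable def latNorm {d : ℕ} (x : Fin d → ℤ) : ℕ :=
  Finset.univ.sup fun i => (x i).natAbs

lemma abs_le_znorm {d : ℕ} (x : Fin d → ℤ) (i : Fin d) : |(x i : ℝ)| ≤ znorm x := by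
  unfold znorm; simpa using norm_le_pi_norm (fun j => (x j : ℝ)) i

lemma cast_natAbs_eq_abs (n : ℤ) : ((n.natAbs : ℝ)) = |(n : ℝ)| := by
  rw [← Int.cast_abs, Int.abs_eq_natAbs, Int.cast_natCast]

lemma znorm_eq_latNorm {d : ℕ} (x : Fin d → ℤ) : znorm x = latNorm x := by
  apply le_antisymm
  · apply pi_norm_le_iff_of_nonneg (by positivity) |>.2
    intro i
    rw [Real.norm_eq_abs, ← cast_natAbs_eq_abs]
    have : (x i).natAbs ≤ latNorm x :=
      Finset.le_sup (f := fun i => (x i).natAbs) (Finset.mem_univ i)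
    exact_mod_cast this
  · rcases isEmpty_or_nonempty (Fin d) with h | h
    · simp only [latNorm, Finset.univ_eq_empty, Finset.sup_empty, Nat.bot_eq_zero,
        Nat.cast_zero]
      exact norm_nonneg _
    · obtain ⟨i, -, hi⟩ := Finset.exists_mem_eq_sup Finset.univ Finset.univ_nonempty
        (fun i => (x i).natAbs)
      calc (latNorm x : ℝ) = ((x i).natAbs : ℝ) := by rw [latNorm, hi]
        _ = |(x i : ℝ)| := cast_natAbs_eq_abs _
        _ ≤ znorm x := abs_le_znorm x i

lemma znorm_nonneg {d : ℕ} (x : Fin d → ℤ) : 0 ≤ znorm x := norm_nonneg _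

lemma one_le_znorm {d : ℕ} {x : Fin d → ℤ} (hx : x ≠ 0) : 1 ≤ znorm x := by
  obtain ⟨i, hi⟩ : ∃ i, x i ≠ 0 := by
    by_contra h; push_neg at h; exact hx (funext h)
  calc (1:ℝ) ≤ |(x i : ℝ)| := by
        rw [← cast_natAbs_eq_abs]
        exact_mod_cast Nat.one_le_iff_ne_zero.mpr (Int.natAbs_ne_zero.mpr hi)
    _ ≤ znorm x := abs_le_znorm x i

lemma znorm_pos {d : ℕ} {x : Fin d → ℤ} (hx : x ≠ 0) : 0 < znorm x :=
  lt_of_lt_of_le one_pos (one_le_znorm hx)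

lemma memQ {d n : ℕ} {x : Fin d → ℤ} :
    x ∈ Finset.Icc (fun _ => -(n:ℤ)) (fun _ => (n:ℤ)) ↔ latNorm x ≤ n := by
  rw [Finset.mem_Icc, latNorm, Finset.sup_le_iff]
  simp only [Pi.le_def, Finset.mem_univ, forall_true_left]
  constructor
  · rintro ⟨h1, h2⟩ i; have := h1 i; have := h2 i; omega
  · intro h; exact ⟨fun i => by have := h i; omega, fun i => by have := h i; omega⟩

lemma cardQ {d : ℕ} (n : ℕ) :
    (Finset.Icc (fun _ => -(n:ℤ)) (fun _ => (n:ℤ)) : Finset (Fin d → ℤ)).card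
      = (2 * n + 1) ^ d := by
  rw [Pi.card_Icc]
  simp only [Int.card_Icc]
  rw [Finset.prod_const, Finset.card_univ, Fintype.card_fin]
  congr 1
  omega

lemma lattice_summable {d : ℕ} (hd : 1 ≤ d) {p : ℝ} (hp : (d:ℝ) < p) :
    Summable fun x : Fin d → ℤ => znorm x ^ (-p) := by
  classical
  have hd1 : (1:ℝ) ≤ (d:ℝ) := by exact_mod_cast hd
  set Q : ℕ → Finset (Fin d → ℤ) :=
    fun n => Finset.Icc (fun _ => -(n:ℤ)) (fun _ => (n:ℤ)) with hQ
  set sh : ℕ → Finset (Fin d → ℤ) := fun n => (Q n).filter fun x => latNorm x = n with hsh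
  have hmem : ∀ (x : Fin d → ℤ) (n : ℕ), x ∈ sh n ↔ latNorm x = n := by
    intro x n
    simp only [hsh, Finset.mem_filter, hQ, memQ]
    exact ⟨fun h => h.2, fun h => ⟨le_of_eq h, h⟩⟩
  have hEU : ∀ x : Fin d → ℤ, ∃! n : ℕ, x ∈ (↑(sh n) : Set (Fin d → ℤ)) := by
    intro x
    refine ⟨latNorm x, by simp [hmem], fun n hn => ?_⟩
    simp only [Finset.coe_sort_coe, Finset.mem_coe, hmem] at hn
    omega
  rw [summable_partition (f := fun x : Fin d → ℤ => znorm x ^ (-p))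
    (fun x => Real.rpow_nonneg (znorm_nonneg x) _) hEU]
  refine ⟨fun n => Summable.of_finite, ?_⟩
  have hval : ∀ n : ℕ, ∑' x : (↑(sh n) : Set (Fin d → ℤ)), znorm x.1 ^ (-p)
      = (sh n).card * (n:ℝ) ^ (-p) := by
    intro n
    rw [Finset.tsum_subtype' (sh n) (fun x => znorm x ^ (-p))]
    rw [Finset.sum_congr rfl (fun x hx => by
      rw [znorm_eq_latNorm, (hmem x n).1 hx]), Finset.sum_const, nsmul_eq_mul]
  have hcard : ∀ n : ℕ, 1 ≤ n → ((sh n).card : ℝ) ≤ 2 * d * (3 * n) ^ (d - 1) := by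
    rintro n hn
    have hnR : (1:ℝ) ≤ (n:ℝ) := by exact_mod_cast hn
    have hsub : sh n ⊆ Q n \ Q (n - 1) := by
      intro x hx
      rw [hmem] at hx
      rw [Finset.mem_sdiff, hQ]
      refine ⟨memQ.2 hx.le, fun hxx => ?_⟩
      rw [memQ] at hxx
      omega
    have h1 : Q (n-1) ⊆ Q n := fun x hx => by
      rw [hQ, memQ] at hx ⊢; omega
    have h2 := (Finset.card_le_card hsub).trans_eq (Finset.card_sdiff_of_subset h1)
    rw [cardQ, cardQ] at h2
    have hma : 2 * (n-1) + 1 ≤ 2 * n + 1 := by omega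
    have hcast : ((sh n).card : ℝ) ≤ ((2*n+1:ℕ):ℝ)^d - ((2*(n-1)+1:ℕ):ℝ)^d := by
      rw [← Nat.cast_pow, ← Nat.cast_pow, ← Nat.cast_sub (Nat.pow_le_pow_left hma d)]
      exact_mod_cast h2
    set a : ℝ := ((2*n+1:ℕ):ℝ)
    set b : ℝ := ((2*(n-1)+1:ℕ):ℝ)
    have hb0 : 0 ≤ b := Nat.cast_nonneg _
    have hba : b ≤ a := Nat.cast_le.mpr hma
    have haval : a = 2 * (n:ℝ) + 1 := by simp only [a]; push_cast; ring
    have hbval : b = 2 * (n:ℝ) - 1 := by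
      simp only [b]; push_cast [Nat.cast_sub hn]; ring
    have hab : a - b = 2 := by rw [haval, hbval]; ring
    have ha3 : a ≤ 3 * (n : ℝ) := by rw [haval]; linarith
    have hgeom : a ^ d - b ^ d
        = (∑ i ∈ Finset.range d, a ^ i * b ^ (d - 1 - i)) * (a - b) :=
      (geom_sum₂_mul a b d).symm
    have hsumle : (∑ i ∈ Finset.range d, a ^ i * b ^ (d - 1 - i)) ≤ d * a ^ (d - 1) := by
      calc (∑ i ∈ Finset.range d, a ^ i * b ^ (d - 1 - i))
          ≤ ∑ _i ∈ Finset.range d, a ^ (d - 1) := by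
            refine Finset.sum_le_sum fun i hi => ?_
            have hi' : i < d := Finset.mem_range.mp hi
            have h1 : b ^ (d - 1 - i) ≤ a ^ (d - 1 - i) := pow_le_pow_left₀ hb0 hba _
            have h2 : a ^ i * b ^ (d - 1 - i) ≤ a ^ i * a ^ (d - 1 - i) :=
              mul_le_mul_of_nonneg_left h1 (pow_nonneg (hb0.trans hba) _)
            refine h2.trans ?_
            rw [← pow_add]
            have : i + (d - 1 - i) = d - 1 := by omega
            rw [this]
        _ = d * a ^ (d - 1) := by
            rw [Finset.sum_const, Finset.card_range, nsmul_eq_mul]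
    have ha0 : 0 ≤ a := hb0.trans hba
    calc ((sh n).card : ℝ) ≤ a ^ d - b ^ d := hcast
      _ = (∑ i ∈ Finset.range d, a ^ i * b ^ (d - 1 - i)) * (a - b) := hgeom
      _ ≤ (d * a ^ (d - 1)) * 2 := by
          rw [hab]
          exact mul_le_mul_of_nonneg_right hsumle (by norm_num)
      _ ≤ (d * (3 * (n:ℝ)) ^ (d - 1)) * 2 := by
          have : a ^ (d-1) ≤ (3 * (n:ℝ)) ^ (d - 1) := pow_le_pow_left₀ ha0 ha3 _
          nlinarith [this, Nat.cast_nonneg (α := ℝ) d]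
      _ = 2 * d * (3 * (n:ℝ)) ^ (d - 1) := by ring
  have hp1 : (d:ℝ) - 1 - p < -1 := by linarith
  apply Summable.of_norm_bounded_eventually_nat
    (g := fun n => (2 * d * 3 ^ (d-1) : ℝ) * (n:ℝ) ^ ((d:ℝ) - 1 - p))
    ((Real.summable_nat_rpow.mpr hp1).mul_left _)
  filter_upwards [Filter.eventually_ge_atTop 1] with n hn
  have hn0 : (0:ℝ) < (n:ℝ) := by exact_mod_cast hn
  rw [hval n, Real.norm_of_nonneg (by positivity)]
  have hrpow : (n:ℝ) ^ ((d:ℝ) - 1 - p) = (n:ℝ) ^ (d - 1) * (n:ℝ) ^ (-p) := by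
    rw [sub_eq_add_neg ((d:ℝ)-1) p, Real.rpow_add hn0]
    congr 1
    have : (d:ℝ) - 1 = ((d - 1 : ℕ) : ℝ) := by
      have : 1 ≤ d := hd
      push_cast [Nat.cast_sub this]
      ring
    rw [this, Real.rpow_natCast]
  calc ((sh n).card : ℝ) * (n:ℝ) ^ (-p)
      ≤ (2 * d * (3 * (n:ℝ)) ^ (d - 1)) * (n:ℝ) ^ (-p) :=
        mul_le_mul_of_nonneg_right (hcard n hn) (Real.rpow_nonneg hn0.le _)
    _ = (2 * d * 3 ^ (d-1) : ℝ) * (n:ℝ) ^ ((d:ℝ) - 1 - p) := by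
        rw [hrpow, mul_pow]
        ring

lemma summable_pi_prod {X : Type*} {h : X → ℝ} (h0 : ∀ x, 0 ≤ h x) (hs : Summable h) :
    ∀ n : ℕ, Summable fun v : Fin n → X => ∏ m, h (v m) := by
  intro n
  induction n with
  | zero => exact Summable.of_finite
  | succ n ih =>
      have hmul : Summable fun p : X × (Fin n → X) => h p.1 * ∏ m, h (p.2 m) :=
        Summable.mul_of_nonneg (f := h) (g := fun v : Fin n → X => ∏ m, h (v m)) hs ih
          (fun x => h0 x) (fun v => Finset.prod_nonneg fun m _ => h0 _)
      rw [← (Fin.consEquiv (fun _ : Fin (n+1) => X)).summable_iff]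
      refine hmul.congr fun p => ?_
      simp only [Function.comp_apply, Fin.consEquiv_apply]
      rw [Fin.prod_univ_succ]
      simp [Fin.cons_zero, Fin.cons_succ]

end Stmt15Aux

open Stmt15Aux

/-- Each coordinate `N_k` of a polynomial nonlinearity (a finite sum of `M` monomials,
the `t`-th of degree `l t` with derivative multi-indices `β t m` of order `≤ r`) is
continuous on `W_P(C,s)` with respect to the product (pointwise-convergence) topology,
provided `s > d + r`. -/
theorem stmt15 {d r M : ℕ} (hd : 1 ≤ d) (C s : ℝ) (hC : 0 < C) (hs : (d : ℝ) + r < s)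
    (l : Fin M → ℕ) (hl : ∀ t, 1 ≤ l t) (a : Fin M → ℂ)
    (β : (t : Fin M) → Fin (l t) → Fin d → ℕ) (hβ : ∀ t m, (∑ i, β t m i) ≤ r)
    (k : Fin d → ℤ) :
    ContinuousOn
      (fun u : (Fin d → ℤ) → ℂ =>
        ∑ t : Fin M, a t * ∑' v : {v : Fin (l t) → (Fin d → ℤ) // ∑ m, v m = k},
          ∏ m, fac u (β t m) (v.1 m))
      {u : (Fin d → ℤ) → ℂ |
        (∀ k' : Fin d → ℤ, k' ≠ 0 → ‖u k'‖ ≤ C / znorm k' ^ s) ∧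
        ‖u 0‖ ≤ C} := by
  classical
  set W : Set ((Fin d → ℤ) → ℂ) :=
    {u : (Fin d → ℤ) → ℂ |
        (∀ k' : Fin d → ℤ, k' ≠ 0 → ‖u k'‖ ≤ C / znorm k' ^ s) ∧
        ‖u 0‖ ≤ C} with hW
  -- the dominating function
  set h : (Fin d → ℤ) → ℝ := fun w => C * max 1 (znorm w) ^ ((r:ℝ) - s) with hh
  have h0 : ∀ w, 0 ≤ h w := by
    intro w
    have : (0:ℝ) < max 1 (znorm w) := lt_of_lt_of_le one_pos (le_max_left _ _)
    positivity
  -- value of h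
  have hval0 : h 0 = C := by
    simp only [hh, znorm]
    have : (fun i => (((0 : Fin d → ℤ)) i : ℝ)) = (0 : Fin d → ℝ) := funext fun i => by simp
    rw [this, norm_zero, max_eq_left (by norm_num), Real.one_rpow, mul_one]
  have hvalne : ∀ w : Fin d → ℤ, w ≠ 0 → h w = C * znorm w ^ ((r:ℝ) - s) := by
    intro w hw
    simp only [hh]
    rw [max_eq_right (one_le_znorm hw)]
  -- summability of h
  have hsumh : Summable h := by
    have hp : (d:ℝ) < s - r := by linarith
    have h1 : Summable fun w : Fin d → ℤ => C * znorm w ^ (-(s - (r:ℝ))) :=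
      (lattice_summable hd hp).mul_left C
    rw [← (Set.finite_singleton (0 : Fin d → ℤ)).summable_compl_iff]
    refine ((h1.subtype _).congr fun w => ?_)
    have hw : (w : Fin d → ℤ) ≠ 0 := Set.mem_compl_singleton_iff.mp w.2
    simp only [Function.comp_apply]
    rw [hvalne _ hw, neg_sub]
  -- bound on fac
  have hfac : ∀ u ∈ W, ∀ (bb : Fin d → ℕ), (∑ i, bb i) ≤ r → ∀ w : Fin d → ℤ,
      ‖fac u bb w‖ ≤ h w := by
    intro u hu bb hbb w
    obtain ⟨hu1, hu2⟩ := hu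
    have habs : ‖fac u bb w‖
        = (∏ i, |(w i : ℝ)| ^ bb i) * ‖u w‖ := by
      rw [fac, norm_mul, norm_mul, norm_pow, Complex.norm_I, one_pow, one_mul, norm_prod]
      congr 1
      refine Finset.prod_congr rfl fun i _ => ?_
      rw [norm_pow, Complex.norm_intCast]
    rw [habs]
    by_cases hw : w = 0
    · subst hw
      rw [hval0]
      have hprod : (∏ i, |(((0:Fin d → ℤ)) i : ℝ)| ^ bb i) ≤ 1 := by
        refine Finset.prod_le_one (fun i _ => by positivity) (fun i _ => ?_)
        simp only [Pi.zero_apply, Int.cast_zero, abs_zero]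
        exact pow_le_one₀ le_rfl zero_le_one
      calc (∏ i, |(((0:Fin d → ℤ)) i : ℝ)| ^ bb i) * ‖u 0‖
          ≤ 1 * ‖u 0‖ :=
            mul_le_mul_of_nonneg_right hprod (norm_nonneg _)
        _ = ‖u 0‖ := one_mul _
        _ ≤ C := hu2
    · have hz1 : 1 ≤ znorm w := one_le_znorm hw
      have hz0 : 0 < znorm w := znorm_pos hw
      have hprod : (∏ i, |(w i : ℝ)| ^ bb i) ≤ znorm w ^ r := by
        calc (∏ i, |(w i : ℝ)| ^ bb i) ≤ ∏ i, znorm w ^ bb i := by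
              refine Finset.prod_le_prod (fun i _ => by positivity) fun i _ => ?_
              exact pow_le_pow_left₀ (abs_nonneg _) (abs_le_znorm w i) _
          _ = znorm w ^ (∑ i, bb i) := by rw [← Finset.prod_pow_eq_pow_sum]
          _ ≤ znorm w ^ r := pow_le_pow_right₀ hz1 hbb
      have huw : ‖u w‖ ≤ C / znorm w ^ s := hu1 w hw
      rw [hvalne _ hw]
      calc (∏ i, |(w i : ℝ)| ^ bb i) * ‖u w‖
          ≤ znorm w ^ r * (C / znorm w ^ s) := by
            apply mul_le_mul hprod huw (norm_nonneg _) (by positivity)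
        _ = C * znorm w ^ ((r:ℝ) - s) := by
            rw [Real.rpow_sub hz0, ← Real.rpow_natCast (znorm w) r]
            ring
  -- now prove continuity, term by term in t
  rw [hW]
  apply continuousOn_finset_sum
  intro t _
  apply ContinuousOn.mul continuousOn_const
  -- summable bound over the subtype
  have hsum1 : Summable fun v : Fin (l t) → (Fin d → ℤ) => ∏ m, h (v m) :=
    summable_pi_prod h0 hsumh (l t)
  have hsum2 : Summable fun v : {v : Fin (l t) → (Fin d → ℤ) // ∑ m, v m = k} =>
      ∏ m, h (v.1 m) :=
    hsum1.subtype {v : Fin (l t) → (Fin d → ℤ) | ∑ m, v m = k}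
  apply continuousOn_tsum (u := fun v : {v : Fin (l t) → (Fin d → ℤ) // ∑ m, v m = k} =>
      ∏ m, h (v.1 m)) ?_ hsum2
  · -- bound
    intro v u hu
    rw [norm_prod]
    refine Finset.prod_le_prod (fun m _ => norm_nonneg _) fun m _ => ?_
    exact hfac u hu (β t m) (hβ t m) (v.1 m)
  · -- continuity of each term
    intro v
    apply Continuous.continuousOn
    apply continuous_finset_prod
    intro m _
    exact continuous_const.mul (continuous_apply (v.1 m))
end
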